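/- Let k ≥ 2, P ≥ 1, and for 1 ≤ i ≤ P let h_i ≥ 0 and 1 ≤ b_i ≤ k−1 with b_1·k^{h_1} ≤ b_2·k^{h_2} ≤ ⋯ ≤ b_P·k^{h_P}. Then the maximum number of steals from the multiset {ACT(b_1, k, h_1), …, ACT(b_P, k, h_P)} equals ∑_{i=1}^{P} Φ_R(ACT(b_i, k, h_i), i−1). -/

import Mathlib

/-- A rooted tree: a root with a finite ordered list of children. -/
inductive RTree : Type
  | node : List RTree → RTree

/-- A rooted computation tree: no node has exactly one child. -/
inductive RTree.Valid : RTree → Prop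
  | mk (cs : List RTree) (hlen : cs.length ≠ 1) (hc : ∀ c ∈ cs, RTree.Valid c) :
      RTree.Valid (RTree.node cs)

/-- A steal step on a multiset of rooted computation trees: choose an arbitrary tree `U`
and a tree whose root has children `cs ++ [c]` (at least two children); the stolen subtree
is the last child `c`, and the remainder is the root with the other children if there were
more than two, or the single other child if there were exactly two. -/
def RStealStep (S S' : Multiset RTree) : Prop :=
  ∃ (U c : RTree) (cs : List RTree) (S₀ : Multiset RTree),
    S = U ::ₘ RTree.node (cs ++ [c]) ::ₘ S₀ ∧
      ((∃ a, cs = [a] ∧ S' = a ::ₘ c ::ₘ S₀) ∨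
        (2 ≤ cs.length ∧ S' = RTree.node cs ::ₘ c ::ₘ S₀))

/-- `RStealSeq n S` means there exists a sequence of `n` steal steps starting from `S`. -/
def RStealSeq : ℕ → Multiset RTree → Prop
  | 0, _ => True
  | n + 1, S => ∃ S', RStealStep S S' ∧ RStealSeq n S'

/-- The maximum length of a sequence of steal steps starting from `S`. -/
noncomputable def stealsR (S : Multiset RTree) : ℕ :=
  sSup {n | RStealSeq n S}

/-- The `n`-th potential of a rooted computation tree `T`. -/
noncomputable def PhiR (T : RTree) (n : ℕ) : ℕ :=
  stealsR (T ::ₘ Multiset.replicate n (RTree.node []))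

/-- The complete `k`-ary tree of height `h`. -/
def CKT (k : ℕ) : ℕ → RTree
  | 0 => RTree.node []
  | h + 1 => RTree.node (List.replicate k (CKT k h))

/-- The almost complete `k`-ary tree with `b · k^h` leaves: the complete `k`-ary tree
of height `h` if `b = 1`, and a root with `b` children each equal to `CKT k h` if `b ≥ 2`. -/
def ACT (b k h : ℕ) : RTree :=
  if b = 1 then CKT k h else RTree.node (List.replicate b (CKT k h))

def Vk (k K : ℕ) : Prop := K % k ≠ 0
def dec1 (k K : ℕ) : ℕ := if 2 ≤ K % k then K - 1 else K - 2
def dec2 (k K : ℕ) : ℕ := if 2 ≤ K % k then k * (K / k) + 1 else k * (K / k - 1) + 1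

def Fp (k m n : ℕ) : ℕ := ∑ t ∈ Finset.range n, Nat.choose m t * (k-1)^t
def dlt (k K t : ℕ) : ℕ :=
  (K % k - 1) * (Nat.choose (K / k) t * (k-1)^t) + Nat.choose (K / k) (t+1) * (k-1)^(t+1)
def G (k K n : ℕ) : ℕ := ∑ t ∈ Finset.range n, dlt k K t

lemma Fp_succ' (k m n : ℕ) :
    Fp k m (n+1) = 1 + ∑ t ∈ Finset.range n, Nat.choose m (t+1) * (k-1)^(t+1) := by
  rw [Fp, Finset.sum_range_succ']
  simp [add_comm]

lemma Fp_pos (k m n : ℕ) : 1 ≤ Fp k m (n+1) := by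
  rw [Fp_succ']; omega

lemma Fp_pascal (k m n : ℕ) : Fp k (m+1) (n+1) = Fp k m (n+1) + (k-1) * Fp k m n := by
  rw [Fp_succ', Fp_succ', Fp, Finset.mul_sum]
  have : ∀ t, Nat.choose (m+1) (t+1) * (k-1)^(t+1)
      = Nat.choose m (t+1) * (k-1)^(t+1) + (k-1) * (Nat.choose m t * (k-1)^t) := by
    intro t
    rw [Nat.choose_succ_succ]
    ring
  rw [Finset.sum_congr rfl (fun t _ => this t), Finset.sum_add_distrib]
  ring

lemma key_mod (k m j : ℕ) (hjk : j < k) : (k*m+j) % k = j := by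
  rw [Nat.mul_add_mod, Nat.mod_eq_of_lt hjk]

lemma key_div (k m j : ℕ) (hjk : j < k) : (k*m+j) / k = m := by
  rw [Nat.mul_add_div (by omega), Nat.div_eq_of_lt hjk, add_zero]

lemma G_eq (k m j n : ℕ) (hj0 : 1 ≤ j) (hjk : j < k) :
    G k (k*m+j) n + 1 = (j-1) * Fp k m n + Fp k m (n+1) := by
  have : G k (k*m+j) n = (j-1) * Fp k m n + ∑ t ∈ Finset.range n, Nat.choose m (t+1) * (k-1)^(t+1) := by
    rw [G, Fp, Finset.mul_sum, ← Finset.sum_add_distrib]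
    refine Finset.sum_congr rfl fun t _ => ?_
    rw [dlt, key_mod k m j hjk, key_div k m j hjk]
  rw [this, Fp_succ']
  ring

lemma G_mono (k K : ℕ) {n n' : ℕ} (h : n ≤ n') : G k K n ≤ G k K n' :=
  Finset.sum_le_sum_of_subset (Finset.range_subset_range.2 h)

lemma G_one (k : ℕ) (hk : 2 ≤ k) (n : ℕ) : G k 1 n = 0 := by
  rw [G]
  refine Finset.sum_eq_zero fun t _ => ?_
  rw [dlt, Nat.mod_eq_of_lt (by omega), Nat.div_eq_of_lt (by omega)]
  simp

lemma G_succ (k K n : ℕ) : G k K (n+1) = G k K n + dlt k K n := Finset.sum_range_succ _ _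

lemma dlt_mono (k : ℕ) (hk : 2 ≤ k) {K K' : ℕ} (hK : K % k ≠ 0) (hK' : K' % k ≠ 0)
    (h : K ≤ K') (t : ℕ) : dlt k K t ≤ dlt k K' t := by
  have hm : K / k ≤ K' / k := Nat.div_le_div_right h
  rcases eq_or_lt_of_le hm with hmm | hmm
  · -- same quotient: compare mods
    have hj : K % k ≤ K' % k := by
      have h1 : k * (K' / k) + K % k = K := by rw [← hmm]; exact Nat.div_add_mod K k
      have h2 := Nat.div_add_mod K' k
      omega
    rw [dlt, dlt, ← hmm]
    have : K % k - 1 ≤ K' % k - 1 := by omega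
    exact Nat.add_le_add (Nat.mul_le_mul_right _ this) le_rfl
  · -- strictly larger quotient
    rw [dlt, dlt]
    have hmod : K % k - 1 ≤ k - 2 := by
      have := Nat.mod_lt K (show 0 < k by omega)
      omega
    calc (K % k - 1) * (Nat.choose (K / k) t * (k-1)^t) + Nat.choose (K / k) (t+1) * (k-1)^(t+1)
        ≤ Nat.choose (K / k) t * (k-1)^(t+1) + Nat.choose (K / k) (t+1) * (k-1)^(t+1) := by
          refine Nat.add_le_add ?_ le_rfl
          have h1 : (K % k - 1) * (Nat.choose (K / k) t * (k-1)^t)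
              ≤ (k-1) * (Nat.choose (K / k) t * (k-1)^t) :=
            Nat.mul_le_mul_right _ (by omega)
          have h2 : (k-1) * (Nat.choose (K / k) t * (k-1)^t)
              = Nat.choose (K / k) t * (k-1)^(t+1) := by ring
          omega
      _ = (Nat.choose (K / k) t + Nat.choose (K / k) (t+1)) * (k-1)^(t+1) := by ring
      _ = Nat.choose (K / k + 1) (t+1) * (k-1)^(t+1) := by rw [Nat.choose_succ_succ']
      _ ≤ Nat.choose (K' / k) (t+1) * (k-1)^(t+1) := by
          exact Nat.mul_le_mul_right _ (Nat.choose_le_choose _ (by omega))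
      _ ≤ dlt k K' t := Nat.le_add_left _ _

section
variable (k K : ℕ) (hk : 2 ≤ k) (hK : Vk k K) (h1 : K ≠ 1)
include hk hK h1

private lemma key_cases :
    (∃ m j, 2 ≤ j ∧ j < k ∧ K = k*m+j ∧ dec1 k K = k*m+(j-1) ∧ dec2 k K = k*m+1) ∨
    (∃ m, K = k*(m+1)+1 ∧ dec1 k K = k*m+(k-1) ∧ dec2 k K = k*m+1) := by
  have hdm := Nat.div_add_mod K k
  have hmlt : K % k < k := Nat.mod_lt _ (by omega)
  rcases Nat.lt_or_ge (K % k) 2 with hj | hj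
  · right
    have hj1 : K % k = 1 := by unfold Vk at hK; omega
    have hm1 : 1 ≤ K / k := by
      rcases Nat.eq_zero_or_pos (K / k) with h0 | h0
      · rw [h0, Nat.mul_zero] at hdm; omega
      · exact h0
    obtain ⟨m, hm⟩ : ∃ m, K / k = m + 1 := ⟨K / k - 1, by omega⟩
    rw [hm] at hdm
    refine ⟨m, by omega, ?_, ?_⟩
    · rw [dec1, if_neg (by omega)]
      have : k * (m + 1) = k * m + k := by ring
      omega
    · rw [dec2, if_neg (by omega), hm]
      simp
  · left
    have hdm2 : k * (K / k) + (K % k - 1) = K - 1 := by omega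
    refine ⟨K / k, K % k, hj, hmlt, by omega, ?_, ?_⟩
    · rw [dec1, if_pos hj]; omega
    · rw [dec2, if_pos hj]
end

section
variable (k K : ℕ) (hk : 2 ≤ k) (hK : Vk k K) (h1 : K ≠ 1)
include hk hK h1

lemma dec1_lt : dec1 k K < K := by
  rcases key_cases k K hk hK h1 with ⟨m,j,hj2,hjk,hKe,hd1,_⟩ | ⟨m,hKe,hd1,_⟩
  · omega
  · have : k * (m+1) = k * m + k := by ring
    omega

lemma dec2_lt : dec2 k K < K := by
  rcases key_cases k K hk hK h1 with ⟨m,j,hj2,hjk,hKe,_,hd2⟩ | ⟨m,hKe,_,hd2⟩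
  · omega
  · have : k * (m+1) = k * m + k := by ring
    omega

lemma dec1_valid : Vk k (dec1 k K) := by
  rcases key_cases k K hk hK h1 with ⟨m,j,hj2,hjk,hKe,hd1,_⟩ | ⟨m,hKe,hd1,_⟩ <;>
    rw [Vk, hd1, key_mod k _ _ (by omega)] <;> omega

lemma dec2_valid : Vk k (dec2 k K) := by
  rcases key_cases k K hk hK h1 with ⟨m,j,hj2,hjk,hKe,_,hd2⟩ | ⟨m,hKe,_,hd2⟩ <;>
    rw [Vk, hd2, key_mod k _ _ (by omega)] <;> omega

lemma dec2_le_dec1 : dec2 k K ≤ dec1 k K := by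
  rcases key_cases k K hk hK h1 with ⟨m,j,hj2,hjk,hKe,hd1,hd2⟩ | ⟨m,hKe,hd1,hd2⟩ <;> omega

lemma G_split (n : ℕ) :
    G k K (n+1) = 1 + G k (dec2 k K) n + G k (dec1 k K) (n+1) := by
  rcases key_cases k K hk hK h1 with ⟨m,j,hj2,hjk,hKe,hd1,hd2⟩ | ⟨m,hKe,hd1,hd2⟩
  · rw [hd1, hd2, hKe]
    have e1 := G_eq k m j (n+1) (by omega) hjk
    have e2 := G_eq k m 1 n (by omega) (by omega)
    have e3 := G_eq k m (j-1) (n+1) (by omega) (by omega)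
    have ej : (j-1) * Fp k m (n+1) = (j-1-1) * Fp k m (n+1) + Fp k m (n+1) := by
      obtain ⟨a, ha⟩ : ∃ a, j - 1 = a + 1 := ⟨j-2, by omega⟩
      rw [ha]
      have : a + 1 - 1 = a := by omega
      rw [this]; ring
    omega
  · rw [hd1, hd2, hKe]
    have e1 := G_eq k (m+1) 1 (n+1) (by omega) (by omega)
    have e2 := G_eq k m 1 n (by omega) (by omega)
    have e3 := G_eq k m (k-1) (n+1) (by omega) (by omega)
    have ep := Fp_pascal k m (n+1)
    have ek : (k-1) * Fp k m (n+1) = (k-1-1) * Fp k m (n+1) + Fp k m (n+1) := by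
      obtain ⟨a, ha⟩ : ∃ a, k - 1 = a + 1 := ⟨k-2, by omega⟩
      rw [ha]
      have : a + 1 - 1 = a := by omega
      rw [this]; ring
    omega
end

def psi (k : ℕ) : ℕ → List ℕ → ℕ
  | _, [] => 0
  | c, K :: l => G k K c + psi k (c+1) l

lemma psi_append (k : ℕ) (u : List ℕ) : ∀ (c : ℕ) (v : List ℕ),
    psi k c (u ++ v) = psi k c u + psi k (c + u.length) v := by
  induction u with
  | nil => intro c v; simp [psi]
  | cons x xs ih =>
    intro c v
    simp only [List.cons_append, psi, List.append_eq, ih (c+1) v, List.length_cons]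
    have : c + 1 + xs.length = c + (xs.length + 1) := by omega
    rw [this, Nat.add_assoc]

lemma psi_replicate_one (k : ℕ) (hk : 2 ≤ k) (n : ℕ) : ∀ c, psi k c (List.replicate n 1) = 0 := by
  induction n with
  | zero => intro c; simp [psi]
  | succ n ih => intro c; simp [List.replicate_succ, psi, ih, G_one k hk]

lemma psi_cons_erase (k : ℕ) (hk : 2 ≤ k) (x : ℕ) :
    ∀ (l : List ℕ) (c : ℕ), x ∈ l → (∀ y ∈ l, Vk k y) → (∀ y ∈ l, x ≤ y) →
      psi k c l ≤ psi k c (x :: l.erase x) := by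
  intro l
  induction l with
  | nil => intro c hx; cases hx
  | cons y ys ih =>
    intro c hx hv hmin
    by_cases hxy : y = x
    · subst hxy; rw [List.erase_cons_head]
    · have hx' : x ∈ ys := by
        rcases List.mem_cons.1 hx with h | h
        · exact absurd h.symm hxy
        · exact h
      rw [List.erase_cons_tail (by simpa using hxy)]
      have ihy := ih (c+1) hx' (fun z hz => hv z (List.mem_cons_of_mem _ hz))
        (fun z hz => hmin z (List.mem_cons_of_mem _ hz))
      simp only [psi] at *
      have key : G k y c + G k x (c+1) ≤ G k x c + G k y (c+1) := by
        have hx1 := G_succ k x c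
        have hy1 := G_succ k y c
        have hd : dlt k x c ≤ dlt k y c :=
          dlt_mono k hk (hv x hx) (hv y List.mem_cons_self)
            (hmin y List.mem_cons_self) c
        omega
      omega

lemma psi_le_sorted (k : ℕ) (hk : 2 ≤ k) :
    ∀ (l' l : List ℕ) (c : ℕ), l.Perm l' → l'.Pairwise (·≤·) → (∀ y ∈ l, Vk k y) →
      psi k c l ≤ psi k c l' := by
  intro l'
  induction l' with
  | nil => intro l c hp _ _; rw [hp.eq_nil]
  | cons x r' ih =>
    intro l c hp hs hv
    have hxl : x ∈ l := hp.mem_iff.2 List.mem_cons_self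
    have hmin : ∀ y ∈ l, x ≤ y := by
      intro y hy
      rcases List.mem_cons.1 (hp.mem_iff.1 hy) with h | h
      · omega
      · exact List.rel_of_pairwise_cons hs h
    have h1 := psi_cons_erase k hk x l c hxl hv hmin
    have hperm : (l.erase x).Perm r' := by
      have := hp.erase x
      rwa [List.erase_cons_head] at this
    have h2 := ih (l.erase x) (c+1) hperm hs.of_cons
      (fun y hy => hv y (List.mem_of_mem_erase hy))
    simp only [psi] at *
    omega

lemma coe_middle (d : ℕ) (A B : List ℕ) :
    ((A ++ d :: B : List ℕ) : Multiset ℕ) = d ::ₘ ↑(A ++ B) := by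
  exact Multiset.coe_eq_coe.2 List.perm_middle

lemma core (k : ℕ) (hk : 2 ≤ k) (p d1 d2 q : ℕ) (D₀ : Multiset ℕ)
    (hvalid : ∀ x ∈ D₀, Vk k x) (hd1 : Vk k d1) (hd2 : Vk k d2)
    (hp : Vk k p) (hq : Vk k q) (hd21 : d2 ≤ d1)
    (hKI : ∀ n, G k d2 n + G k d1 (n+1) + 1 ≤ G k p (n+1))
    (l : List ℕ) (hl : l.Pairwise (·≤·)) (hlM : (l : Multiset ℕ) = q ::ₘ p ::ₘ D₀)
    (s' : List ℕ) (hs' : s'.Pairwise (·≤·)) (hs'M : (s' : Multiset ℕ) = d1 ::ₘ d2 ::ₘ D₀) :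
    psi k 0 s' + 1 ≤ psi k 0 l := by
  classical
  -- find the decomposition s' = A ++ d2 :: C ++ d1 :: B
  obtain ⟨A, C, B, hdec⟩ :
      ∃ A C B : List ℕ, s' = A ++ d2 :: (C ++ d1 :: B) := by
    have hd2m : d2 ∈ s' := by
      rw [← Multiset.mem_coe, hs'M]
      exact Multiset.mem_cons.2 (Or.inr (Multiset.mem_cons_self _ _))
    obtain ⟨A, B, hAB⟩ := List.append_of_mem hd2m
    have hABm : (↑(A ++ B) : Multiset ℕ) = d1 ::ₘ D₀ := by
      have h1 : (↑s' : Multiset ℕ) = d2 ::ₘ ↑(A ++ B) := by rw [hAB]; exact coe_middle _ _ _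
      rw [hs'M, Multiset.cons_swap] at h1
      exact (Multiset.cons_inj_right d2).1 h1.symm
    have hd1m : d1 ∈ A ++ B := by
      rw [← Multiset.mem_coe, hABm]
      exact Multiset.mem_cons_self _ _
    rcases List.mem_append.1 hd1m with hA | hB
    · -- d1 occurs before d2, hence d1 = d2
      obtain ⟨A₁, A₂, hA12⟩ := List.append_of_mem hA
      have heq : d1 = d2 := by
        have hsorted := hs'
        rw [hAB, hA12] at hsorted
        have := (List.pairwise_append.1 hsorted).2.2 d1
          (by simp) d2 List.mem_cons_self
        omega
      refine ⟨A₁, A₂, B, ?_⟩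
      rw [hAB, hA12, heq]
      rw [← heq]
      simp
    · obtain ⟨C, B₂, hB⟩ := List.append_of_mem hB
      exact ⟨A, C, B₂, by rw [hAB, hB]⟩
  -- the rest multiset
  have hrest : (↑(A ++ (C ++ B)) : Multiset ℕ) = D₀ := by
    have h1 : (↑s' : Multiset ℕ) = d2 ::ₘ d1 ::ₘ ↑(A ++ (C ++ B)) := by
      rw [hdec, coe_middle]
      congr 1
      have : A ++ (C ++ d1 :: B) = (A ++ C) ++ d1 :: B := by simp
      rw [this, coe_middle]
      congr 1
      simp
    rw [hs'M, Multiset.cons_swap] at h1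
    have h2 := (Multiset.cons_inj_right d2).1 h1
    exact ((Multiset.cons_inj_right d1).1 h2).symm
  -- the competitor list
  set w : List ℕ := A ++ q :: (C ++ p :: B) with hw
  have hwM : (↑w : Multiset ℕ) = (↑l : Multiset ℕ) := by
    rw [hlM, hw, coe_middle]
    have : A ++ (C ++ p :: B) = (A ++ C) ++ p :: B := by simp
    rw [this, coe_middle]
    congr 1
    congr 1
    rw [← hrest]
    congr 1
    simp
  have hwperm : w.Perm l := Multiset.coe_eq_coe.1 hwM
  have hs'v : ∀ y ∈ s', Vk k y := by
    intro y hy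
    rw [← Multiset.mem_coe, hs'M] at hy
    rcases Multiset.mem_cons.1 hy with rfl | hy
    · exact hd1
    rcases Multiset.mem_cons.1 hy with rfl | hy
    · exact hd2
    · exact hvalid _ hy
  have hwv : ∀ y ∈ w, Vk k y := by
    intro y hy
    rw [hw] at hy
    rcases List.mem_append.1 hy with h | h
    · exact hs'v y (by rw [hdec]; exact List.mem_append.2 (Or.inl h))
    rcases List.mem_cons.1 h with rfl | h
    · exact hq
    rcases List.mem_append.1 h with h | h
    · exact hs'v y (by rw [hdec]; simp [h])
    rcases List.mem_cons.1 h with rfl | h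
    · exact hp
    · exact hs'v y (by rw [hdec]; simp [h])
  -- psi computations
  have es' : psi k 0 s' = psi k 0 A + G k d2 A.length
      + psi k (A.length + 1) C + G k d1 (A.length + 1 + C.length)
      + psi k (A.length + 1 + C.length + 1) B := by
    rw [hdec, psi_append]
    simp only [psi, Nat.zero_add]
    rw [psi_append]
    simp only [psi]
    ring
  have ew : psi k 0 w = psi k 0 A + G k q A.length
      + psi k (A.length + 1) C + G k p (A.length + 1 + C.length)
      + psi k (A.length + 1 + C.length + 1) B := by
    rw [hw, psi_append]
    simp only [psi, Nat.zero_add]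
    rw [psi_append]
    simp only [psi]
    ring
  have hmono : G k d2 A.length ≤ G k d2 (A.length + C.length) := G_mono k d2 (by omega)
  have hki := hKI (A.length + C.length)
  have hidx : A.length + 1 + C.length = A.length + C.length + 1 := by omega
  rw [hidx] at es' ew
  have hle : psi k 0 w ≤ psi k 0 l := psi_le_sorted k hk l w 0 hwperm hl hwv
  omega

def acts (k K : ℕ) : RTree := ACT (K % k) k (K / k)

lemma acts_key (k m j : ℕ) (hjk : j < k) : acts k (k*m+j) = ACT j k m := by
  rw [acts, key_mod k m j hjk, key_div k m j hjk]

lemma ACT_ge2 (b k h : ℕ) (hb : 2 ≤ b) :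
    ACT b k h = RTree.node (List.replicate b (CKT k h)) := by
  rw [ACT, if_neg (by omega)]

lemma acts_one (k : ℕ) (hk : 2 ≤ k) : acts k 1 = RTree.node [] := by
  have : (1:ℕ) = k*0+1 := by ring
  rw [this, acts_key k 0 1 (by omega), ACT, if_pos rfl]
  rfl

lemma acts_shape (k K : ℕ) (hk : 2 ≤ k) (hK : Vk k K) (h1 : K ≠ 1) :
    ∃ B : ℕ, 2 ≤ B ∧ acts k K = RTree.node (List.replicate B (acts k (dec2 k K))) ∧
      (B = 2 → acts k (dec1 k K) = acts k (dec2 k K)) ∧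
      (3 ≤ B → acts k (dec1 k K) = RTree.node (List.replicate (B-1) (acts k (dec2 k K)))) := by
  rcases key_cases k K hk hK h1 with ⟨m,j,hj2,hjk,hKe,hd1,hd2⟩ | ⟨m,hKe,hd1,hd2⟩
  · refine ⟨j, hj2, ?_, ?_, ?_⟩
    · rw [hd2, hKe, acts_key k m j hjk, acts_key k m 1 (by omega), ACT_ge2 _ _ _ hj2,
        ACT, if_pos rfl]
    · intro hB
      rw [hd1, hd2, hB]
    · intro hB
      rw [hd1, hd2, acts_key k m _ (by omega), acts_key k m 1 (by omega),
        ACT_ge2 _ _ _ (by omega), ACT, if_pos rfl]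
  · refine ⟨k, hk, ?_, ?_, ?_⟩
    · rw [hd2, hKe, acts_key k (m+1) 1 (by omega), acts_key k m 1 (by omega),
        ACT, if_pos rfl, ACT, if_pos rfl]
      rfl
    · intro hB
      rw [hd1, hd2, show k - 1 = 1 by omega]
    · intro hB
      rw [hd1, hd2, acts_key k m _ (by omega), acts_key k m 1 (by omega),
        ACT_ge2 _ _ _ (by omega), ACT, if_pos rfl]

lemma step_acts (k K : ℕ) (hk : 2 ≤ k) (hK : Vk k K) (h1 : K ≠ 1) (V : RTree)
    (S₁ : Multiset RTree) :
    RStealStep (acts k K ::ₘ V ::ₘ S₁) (acts k (dec1 k K) ::ₘ acts k (dec2 k K) ::ₘ S₁) := by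
  obtain ⟨B, hB2, hshape, hB2e, hB3e⟩ := acts_shape k K hk hK h1
  set X := acts k (dec2 k K) with hX
  refine ⟨V, X, List.replicate (B-1) X, S₁, ?_, ?_⟩
  · rw [Multiset.cons_swap, hshape]
    have : List.replicate (B-1) X ++ [X] = List.replicate B X := by
      rw [← List.replicate_succ' ]
      congr 1
      omega
    rw [this]
  · rcases Nat.lt_or_ge B 3 with h3 | h3
    · have hB : B = 2 := by omega
      left
      refine ⟨X, by rw [hB]; rfl, ?_⟩
      rw [hB2e hB]
    · right
      constructor
      · rw [List.length_replicate]; omega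
      · rw [hB3e h3]

def Reach : ℕ → Multiset RTree → Multiset RTree → Prop
  | 0, S, F => S = F
  | n + 1, S, F => ∃ S', RStealStep S S' ∧ Reach n S' F

lemma Reach.rsteal : ∀ {n : ℕ} {S F : Multiset RTree}, Reach n S F → RStealSeq n S := by
  intro n
  induction n with
  | zero => intro S F _; trivial
  | succ n ih =>
    rintro S F ⟨S', hst, hr⟩
    exact ⟨S', hst, ih hr⟩

lemma Reach.trans : ∀ {a : ℕ} {S F : Multiset RTree} {b : ℕ} {F' : Multiset RTree},
    Reach a S F → Reach b F F' → Reach (a + b) S F' := by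
  intro a
  induction a with
  | zero =>
    intro S F b F' h h'
    have he : S = F := h
    rw [show (0+b)=b by omega, he]
    exact h'
  | succ a ih =>
    rintro S F b F' ⟨S', hst, hr⟩ h'
    rw [show a+1+b = (a+b)+1 by omega]
    exact ⟨S', hst, ih hr h'⟩

lemma RStealStep.card {S S' : Multiset RTree} (h : RStealStep S S') :
    Multiset.card S' = Multiset.card S := by
  obtain ⟨U, c, cs, S₀, rfl, h⟩ := h
  rcases h with ⟨a, hcs, rfl⟩ | ⟨hlen, rfl⟩ <;> simp

lemma Reach.card : ∀ {n : ℕ} {S F : Multiset RTree}, Reach n S F →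
    Multiset.card F = Multiset.card S := by
  intro n
  induction n with
  | zero => intro S F h; cases h; rfl
  | succ n ih =>
    rintro S F ⟨S', hst, hr⟩
    rw [ih hr, hst.card]

lemma RStealStep.context {S S' : Multiset RTree} (C : Multiset RTree) (h : RStealStep S S') :
    RStealStep (S + C) (S' + C) := by
  obtain ⟨U, c, cs, S₀, rfl, h⟩ := h
  refine ⟨U, c, cs, S₀ + C, by rw [Multiset.cons_add, Multiset.cons_add], ?_⟩
  rcases h with ⟨a, hcs, rfl⟩ | ⟨hlen, rfl⟩
  · exact Or.inl ⟨a, hcs, by rw [Multiset.cons_add, Multiset.cons_add]⟩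
  · exact Or.inr ⟨hlen, by rw [Multiset.cons_add, Multiset.cons_add]⟩

lemma Reach.context : ∀ {n : ℕ} {S F : Multiset RTree} (C : Multiset RTree),
    Reach n S F → Reach n (S + C) (F + C) := by
  intro n
  induction n with
  | zero => intro S F C h; cases h; rfl
  | succ n ih =>
    rintro S F C ⟨S', hst, hr⟩
    exact ⟨S' + C, hst.context C, ih C hr⟩

lemma map_eq_cons' {α β : Type*} (f : α → β) (M : Multiset α) (b : β) (t : Multiset β)
    (h : M.map f = b ::ₘ t) : ∃ a M', M = a ::ₘ M' ∧ f a = b ∧ M'.map f = t := by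
  have hb : b ∈ M.map f := by rw [h]; exact Multiset.mem_cons_self _ _
  obtain ⟨a, ha, hfa⟩ := Multiset.mem_map.1 hb
  obtain ⟨M', rfl⟩ := Multiset.exists_cons_of_mem ha
  refine ⟨a, M', rfl, hfa, ?_⟩
  rw [Multiset.map_cons, hfa] at h
  exact (Multiset.cons_inj_right b).1 h

lemma step_analysis (k : ℕ) (hk : 2 ≤ k) (M : Multiset ℕ) (hM : ∀ K ∈ M, Vk k K)
    {S' : Multiset RTree} (h : RStealStep (M.map (acts k)) S') :
    ∃ q p D₀, M = q ::ₘ p ::ₘ D₀ ∧ p ≠ 1 ∧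
      S' = (acts k (dec1 k p) ::ₘ acts k (dec2 k p) ::ₘ D₀.map (acts k)) := by
  obtain ⟨U, c, cs, S₀, hS, hbr⟩ := h
  obtain ⟨q, M₁, rfl, hfq, hmap1⟩ := map_eq_cons' (acts k) M U _ hS
  obtain ⟨p, D₀, rfl, hfp, hmap0⟩ := map_eq_cons' (acts k) M₁ _ _ hmap1
  have hpmem : p ∈ q ::ₘ p ::ₘ D₀ := Multiset.mem_cons.2 (Or.inr (Multiset.mem_cons_self _ _))
  have hpv : Vk k p := hM p hpmem
  have hp1 : p ≠ 1 := by
    intro hp1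
    rw [hp1, acts_one k hk] at hfp
    injection hfp with he
    simp at he
  obtain ⟨B, hB2, hsh, hB2e, hB3e⟩ := acts_shape k p hk hpv hp1
  set X := acts k (dec2 k p) with hX
  have hlist : cs ++ [c] = List.replicate B X := by
    injection hfp.symm.trans hsh
  have hc : c = X := List.eq_of_mem_replicate (hlist ▸ (by simp : c ∈ cs ++ [c]))
  have hlen : cs.length + 1 = B := by
    have := congrArg List.length hlist
    simpa using this
  have hcs : cs = List.replicate (B-1) X := by
    refine List.eq_replicate_iff.2 ⟨by omega, ?_⟩
    intro y hy
    exact List.eq_of_mem_replicate (hlist ▸ (List.mem_append.2 (Or.inl hy)))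
  refine ⟨q, p, D₀, rfl, hp1, ?_⟩
  rcases hbr with ⟨a, hcsa, rfl⟩ | ⟨hlen2, rfl⟩
  · have hB : B = 2 := by rw [hcsa] at hlen; simpa using hlen.symm
    have ha : a = X := by
      rw [hcsa, hB] at hcs
      simpa using hcs
    rw [ha, hc, hmap0, hB2e hB]
  · have hB3 : 3 ≤ B := by omega
    rw [hc, hmap0, hB3e hB3, ← hcs]


section FINAL
variable (k : ℕ)

lemma Reach.cons {n : ℕ} {S F : Multiset RTree} (a : RTree) (h : Reach n S F) :
    Reach n (a ::ₘ S) (a ::ₘ F) := by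
  have h2 := h.context {a}
  rwa [add_comm S {a}, add_comm F {a}, Multiset.singleton_add, Multiset.singleton_add] at h2

lemma reach_G (hk : 2 ≤ k) :
    ∀ K, Vk k K → ∀ S : Multiset RTree,
      ∃ F, Reach (G k K (Multiset.card S)) (acts k K ::ₘ S) F := by
  intro K
  induction K using Nat.strong_induction_on with
  | _ K ih =>
    intro hK S
    by_cases h1 : K = 1
    · subst h1
      rw [G_one k hk]
      exact ⟨acts k 1 ::ₘ S, rfl⟩
    by_cases hS : S = 0
    · subst hS
      refine ⟨acts k K ::ₘ 0, ?_⟩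
      simp only [Multiset.card_zero]
      have : G k K 0 = 0 := rfl
      rw [this]
      rfl
    obtain ⟨V, hV⟩ := Multiset.exists_mem_of_ne_zero hS
    obtain ⟨S₁, rfl⟩ := Multiset.exists_cons_of_mem hV
    obtain ⟨F₁, hr1⟩ := ih (dec2 k K) (dec2_lt k K hk hK h1) (dec2_valid k K hk hK h1) S₁
    have hcard1 : Multiset.card F₁ = Multiset.card S₁ + 1 := by
      rw [hr1.card, Multiset.card_cons]
    obtain ⟨F₂, hr2⟩ := ih (dec1 k K) (dec1_lt k K hk hK h1) (dec1_valid k K hk hK h1) F₁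
    rw [hcard1] at hr2
    have hr1' := hr1.cons (acts k (dec1 k K))
    have htot := hr1'.trans hr2
    refine ⟨F₂, ?_⟩
    rw [Multiset.card_cons]
    rw [G_split k K hk hK h1 (Multiset.card S₁),
      show 1 + G k (dec2 k K) (Multiset.card S₁)
          + G k (dec1 k K) (Multiset.card S₁ + 1)
        = (G k (dec2 k K) (Multiset.card S₁)
          + G k (dec1 k K) (Multiset.card S₁ + 1)) + 1 by omega]
    exact ⟨acts k (dec1 k K) ::ₘ acts k (dec2 k K) ::ₘ S₁, step_acts k K hk hK h1 V S₁, htot⟩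

lemma lb_list (hk : 2 ≤ k) (l : List ℕ) (hv : ∀ K ∈ l, Vk k K) :
    ∃ F, Reach (psi k 0 l) ((l : Multiset ℕ).map (acts k)) F := by
  induction l using List.reverseRecOn with
  | nil => exact ⟨0, rfl⟩
  | append_singleton l K ih =>
    obtain ⟨F, hr⟩ := ih (fun x hx => hv x (List.mem_append.2 (Or.inl hx)))
    have hKv : Vk k K := hv K (List.mem_append.2 (Or.inr (List.mem_singleton_self _)))
    have hcard : Multiset.card F = l.length := by
      rw [hr.card, Multiset.card_map, Multiset.coe_card]
    obtain ⟨F₂, hr2⟩ := reach_G k hk K hKv F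
    rw [hcard] at hr2
    have hr1' := hr.cons (acts k K)
    have htot := hr1'.trans hr2
    refine ⟨F₂, ?_⟩
    have hml : ((↑(l ++ [K]) : Multiset ℕ)).map (acts k)
        = acts k K ::ₘ ((l : Multiset ℕ).map (acts k)) := by
      have h1 : (↑(l ++ [K]) : Multiset ℕ) = K ::ₘ ↑l := by
        have : (↑(l ++ [K]) : Multiset ℕ) = ↑l + ↑([K] : List ℕ) := by
          exact_mod_cast rfl
        rw [this]
        have h2 : (↑([K] : List ℕ) : Multiset ℕ) = {K} := rfl
        rw [h2, add_comm, Multiset.singleton_add]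
      rw [h1, Multiset.map_cons]
    rw [hml]
    have hpsi : psi k 0 (l ++ [K]) = psi k 0 l + G k K l.length := by
      rw [psi_append]
      simp [psi]
    rw [hpsi]
    exact htot

lemma ub (hk : 2 ≤ k) :
    ∀ (n : ℕ) (l : List ℕ), l.Pairwise (·≤·) → (∀ K ∈ l, Vk k K) →
      RStealSeq n ((l : Multiset ℕ).map (acts k)) → n ≤ psi k 0 l := by
  intro n
  induction n with
  | zero => intro l _ _ _; omega
  | succ n ihn =>
    intro l hsort hv hseq
    obtain ⟨S', hstep, hseq'⟩ := hseq
    obtain ⟨q, p, D₀, hMeq, hp1, hS'eq⟩ :=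
      step_analysis k hk (↑l) (fun K hK => hv K (Multiset.mem_coe.1 hK)) hstep
    have hqmem : q ∈ l := by
      rw [← Multiset.mem_coe, hMeq]; exact Multiset.mem_cons_self _ _
    have hpmem : p ∈ l := by
      rw [← Multiset.mem_coe, hMeq]
      exact Multiset.mem_cons.2 (Or.inr (Multiset.mem_cons_self _ _))
    have hD₀ : ∀ x ∈ D₀, Vk k x := by
      intro x hx
      refine hv x ?_
      rw [← Multiset.mem_coe, hMeq]
      exact Multiset.mem_cons.2 (Or.inr (Multiset.mem_cons.2 (Or.inr hx)))
    have hpv : Vk k p := hv p hpmem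
    have hqv : Vk k q := hv q hqmem
    set D' : Multiset ℕ := dec1 k p ::ₘ dec2 k p ::ₘ D₀ with hD'
    set l' : List ℕ := Multiset.sort D' (·≤·) with hl'
    have hl'M : (↑l' : Multiset ℕ) = D' := Multiset.sort_eq _ _
    have hl'sort : l'.Pairwise (·≤·) := Multiset.pairwise_sort _ _
    have hmap : ((↑l' : Multiset ℕ)).map (acts k) = S' := by
      rw [hl'M, hD', hS'eq, Multiset.map_cons, Multiset.map_cons]
    have hIH : n ≤ psi k 0 l' := by
      refine ihn l' hl'sort ?_ (by rwa [hmap])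
      intro K hK
      rw [← Multiset.mem_coe, hl'M, hD'] at hK
      rcases Multiset.mem_cons.1 hK with rfl | hK
      · exact dec1_valid k p hk hpv hp1
      rcases Multiset.mem_cons.1 hK with rfl | hK
      · exact dec2_valid k p hk hpv hp1
      · exact hD₀ _ hK
    have hcore : psi k 0 l' + 1 ≤ psi k 0 l := by
      refine core k hk p (dec1 k p) (dec2 k p) q D₀ hD₀
        (dec1_valid k p hk hpv hp1) (dec2_valid k p hk hpv hp1) hpv hqv
        (dec2_le_dec1 k p hk hpv hp1) ?_ l hsort hMeq l' hl'sort (by rw [hl'M])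
      intro m
      rw [G_split k p hk hpv hp1 m]
      omega
    omega

lemma steals_eq_of (S : Multiset RTree) (B : ℕ) (hub : ∀ n, RStealSeq n S → n ≤ B)
    (hlb : RStealSeq B S) : stealsR S = B := by
  apply le_antisymm
  · exact csSup_le ⟨0, trivial⟩ hub
  · exact le_csSup ⟨B, fun n hn => hub n hn⟩ hlb

lemma PhiR_acts (hk : 2 ≤ k) (K : ℕ) (hK : Vk k K) (n : ℕ) :
    PhiR (acts k K) n = G k K n := by
  have hK1 : 1 ≤ K := by
    rcases Nat.eq_zero_or_pos K with h0 | h0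
    · exfalso; apply hK; rw [h0]; simp
    · exact h0
  set L : List ℕ := List.replicate n 1 ++ [K] with hL
  have hmult : acts k K ::ₘ Multiset.replicate n (RTree.node [])
      = ((L : Multiset ℕ)).map (acts k) := by
    have h1 : (↑L : Multiset ℕ) = K ::ₘ Multiset.replicate n 1 := by
      have : (↑L : Multiset ℕ) = ↑(List.replicate n 1) + ↑([K] : List ℕ) := by
        exact_mod_cast rfl
      rw [this, Multiset.coe_replicate]
      have h2 : (↑([K] : List ℕ) : Multiset ℕ) = {K} := rfl
      rw [h2, add_comm, Multiset.singleton_add]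
    rw [h1, Multiset.map_cons, Multiset.map_replicate, acts_one k hk]
  have hsorted : L.Pairwise (·≤·) := by
    rw [hL]
    refine List.pairwise_append.2 ⟨?_, ?_, ?_⟩
    · exact List.pairwise_replicate.2 (Or.inr le_rfl)
    · simp
    · intro x hx y hy
      rw [List.eq_of_mem_replicate hx, List.mem_singleton.1 hy]
      exact hK1
  have hvalid : ∀ x ∈ L, Vk k x := by
    intro x hx
    rcases List.mem_append.1 hx with hx | hx
    · rw [List.eq_of_mem_replicate hx, Vk, Nat.mod_eq_of_lt (by omega)]
      omega
    · rw [List.mem_singleton.1 hx]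
      exact hK
  have hpsi : psi k 0 L = G k K n := by
    rw [hL, psi_append, psi_replicate_one k hk]
    simp [psi]
  rw [PhiR]
  refine steals_eq_of _ _ (fun m hm => ?_) ?_
  · rw [hmult] at hm
    rw [← hpsi]
    exact ub k hk m L hsorted hvalid hm
  · obtain ⟨F, hr⟩ := reach_G k hk K hK (Multiset.replicate n (RTree.node []))
    rw [Multiset.card_replicate] at hr
    exact hr.rsteal

lemma psi_ofFn : ∀ (P : ℕ) (f : Fin P → ℕ) (c : ℕ),
    psi k c (List.ofFn f) = ∑ i : Fin P, G k (f i) (c + i.val) := by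
  intro P
  induction P with
  | zero => intro f c; simp [psi]
  | succ P ihP =>
    intro f c
    rw [List.ofFn_succ]
    show G k (f 0) c + psi k (c+1) (List.ofFn fun i => f i.succ) = _
    rw [ihP (fun i => f i.succ) (c+1), Fin.sum_univ_succ]
    simp only [Fin.val_zero, Nat.add_zero, Fin.val_succ]
    congr 1
    refine Finset.sum_congr rfl fun i _ => ?_
    congr 1
    omega

lemma key_le (hk : 2 ≤ k) {b h b' h' : ℕ} (hb1 : 1 ≤ b) (hbk : b ≤ k - 1)
    (hb1' : 1 ≤ b') (hbk' : b' ≤ k - 1) (hsz : b * k ^ h ≤ b' * k ^ h') :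
    k * h + b ≤ k * h' + b' := by
  rcases lt_trichotomy h h' with hlt | heq | hgt
  · have h2 : k * (h+1) = k * h + k := by ring
    have h3 : k * (h+1) ≤ k * h' := Nat.mul_le_mul_left k hlt
    omega
  · subst heq
    have hbb : b ≤ b' := Nat.le_of_mul_le_mul_right hsz (pow_pos (by omega) h)
    omega
  · exfalso
    have h1 : b' * k ^ h' ≤ (k-1) * k ^ h' := Nat.mul_le_mul_right _ hbk'
    have h2 : (k-1) * k ^ h' < k * k ^ h' :=
      (Nat.mul_lt_mul_right (pow_pos (by omega) h')).2 (by omega)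
    have h3 : k * k ^ h' = k ^ (h'+1) := by rw [pow_succ, mul_comm]
    have h4 : k ^ (h'+1) ≤ k ^ h := Nat.pow_le_pow_right (by omega) (by omega)
    have h5 : k ^ h ≤ b * k ^ h := Nat.le_mul_of_pos_left _ hb1
    omega

end FINAL

theorem steals_sorted_ACT (k P : ℕ) (hk : 2 ≤ k) (hP : 1 ≤ P)
    (h b : Fin P → ℕ) (hb1 : ∀ i, 1 ≤ b i) (hbk : ∀ i, b i ≤ k - 1)
    (hsorted : ∀ i j : Fin P, i ≤ j → b i * k ^ h i ≤ b j * k ^ h j) :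
    stealsR (Multiset.map (fun i => ACT (b i) k (h i)) Finset.univ.val) =
      ∑ i : Fin P, PhiR (ACT (b i) k (h i)) i.val := by
  classical
  set f : Fin P → ℕ := fun i => k * h i + b i with hf
  have hbk' : ∀ i, b i < k := fun i => by have := hbk i; omega
  have hfv : ∀ i, Vk k (f i) := by
    intro i
    rw [Vk, hf]
    simp only []
    rw [key_mod k (h i) (b i) (hbk' i)]
    have := hb1 i
    omega
  have hacts : ∀ i, acts k (f i) = ACT (b i) k (h i) :=
    fun i => acts_key k (h i) (b i) (hbk' i)
  set L : List ℕ := List.ofFn f with hL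
  have hmono : Monotone f := fun i j hij =>
    key_le k hk (hb1 i) (hbk i) (hb1 j) (hbk j) (hsorted i j hij)
  have hsortL : L.Pairwise (·≤·) := (List.sortedLE_ofFn_iff.2 hmono).pairwise
  have hvL : ∀ K ∈ L, Vk k K := by
    intro K hK
    rw [hL, List.mem_ofFn] at hK
    obtain ⟨i, rfl⟩ := hK
    exact hfv i
  have hmult : Multiset.map (fun i => ACT (b i) k (h i)) Finset.univ.val
      = ((L : Multiset ℕ)).map (acts k) := by
    have h1 : (Finset.univ.val : Multiset (Fin P)) = ↑(List.finRange P) := rfl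
    rw [h1, Multiset.map_coe, Multiset.map_coe]
    congr 1
    rw [hL, List.map_ofFn, List.ofFn_eq_map]
    refine List.map_congr_left fun i _ => ?_
    exact (hacts i).symm
  have hsum : ∑ i : Fin P, PhiR (ACT (b i) k (h i)) i.val = psi k 0 L := by
    rw [hL, psi_ofFn]
    refine Finset.sum_congr rfl fun i _ => ?_
    rw [← hacts i, PhiR_acts k hk (f i) (hfv i), Nat.zero_add]
  rw [hmult, hsum]
  refine steals_eq_of _ _ (fun n hn => ub k hk n L hsortL hvL hn) ?_
  obtain ⟨F, hr⟩ := lb_list k hk L hvL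
  exact hr.rsteal
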